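/- Let H be a complex Hilbert space and A a densely defined symmetric linear operator in H with domain D = Dom A. Suppose there exist bounded linear operators Q and S on H such that: (i) for every v ∈ D, Qv ∈ D and A(Qv) = v − Sv; (ii) Q*(D) ⊆ D and the operator D ∋ v ↦ A(Q*v) extends to a bounded operator on H; (iii) S*(D) ⊆ D and the operator D ∋ v ↦ A(S*v) extends to a bounded operator on H. Then A is essentially self-adjoint: its closure A̅ is self-adjoint, and A* = A̅. -/

import Mathlib

open scoped InnerProductSpace

/-- **Essential self-adjointness from a parametrix.**
Let `H` be a complex Hilbert space and `A` a densely defined symmetric unbounded operator in `H`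
with domain `D`. Suppose there are bounded operators `Q S : H →L[ℂ] H` such that
(i) `Q` maps `D` into `D` and `A (Q v) = v - S v` for `v ∈ D`;
(ii) `Q*` maps `D` into `D` and `v ↦ A (Q* v)` extends to a bounded operator `B`;
(iii) `S*` maps `D` into `D` and `v ↦ A (S* v)` extends to a bounded operator `C`.
Then `A` is essentially self-adjoint: it is closable, its closure is self-adjoint,
and `A† = A.closure`. -/
theorem essentially_selfAdjoint_of_parametrix
    {H : Type*} [NormedAddCommGroup H] [InnerProductSpace ℂ H] [CompleteSpace H]
    (A : H →ₗ.[ℂ] H) (hdense : Dense (A.domain : Set H))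
    (hsymm : ∀ u v : A.domain, ⟪A u, (v : H)⟫_ℂ = ⟪(u : H), A v⟫_ℂ)
    (Q S : H →L[ℂ] H)
    (hQ : ∀ v : A.domain, Q (v : H) ∈ A.domain)
    (hAQ : ∀ v : A.domain, A ⟨Q (v : H), hQ v⟩ = (v : H) - S (v : H))
    (hQstar : ∀ v : A.domain, ContinuousLinearMap.adjoint Q (v : H) ∈ A.domain)
    (B : H →L[ℂ] H)
    (hB : ∀ v : A.domain, A ⟨ContinuousLinearMap.adjoint Q (v : H), hQstar v⟩ = B (v : H))
    (hSstar : ∀ v : A.domain, ContinuousLinearMap.adjoint S (v : H) ∈ A.domain)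
    (C : H →L[ℂ] H)
    (hC : ∀ v : A.domain, A ⟨ContinuousLinearMap.adjoint S (v : H), hSstar v⟩ = C (v : H)) :
    A.IsClosable ∧ IsSelfAdjoint A.closure ∧ A.adjoint = A.closure := by
  classical
  set G : Set (H × H) := (A.graph : Set (H × H)) with hGdef
  -- Elements of the closure of the graph pair symmetrically with the domain.
  have key : ∀ p ∈ closure G, ∀ v : A.domain, ⟪p.2, (v : H)⟫_ℂ = ⟪p.1, A v⟫_ℂ := by
    intro p hp v
    have hsub : G ⊆ {q : H × H | ⟪q.2, (v : H)⟫_ℂ = ⟪q.1, A v⟫_ℂ} := by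
      intro q hq
      rcases A.mem_graph_iff.mp hq with ⟨u, h1, h2⟩
      simp only [Set.mem_setOf_eq, ← h1, ← h2]
      exact hsymm u v
    exact closure_minimal hsub
      (isClosed_eq (continuous_snd.inner continuous_const)
        (continuous_fst.inner continuous_const)) hp
  -- Membership in the closure of the graph via continuous maps.
  have memcl : ∀ (φ : H → H × H), Continuous φ →
      (∀ v : A.domain, φ (v : H) ∈ A.graph) → ∀ w : H, φ w ∈ closure G := by
    intro φ hφ hmap w
    exact map_mem_closure hφ (hdense w) (fun x hx => hmap ⟨x, hx⟩)
  have hgr : ∀ (x y : H) (hx : x ∈ A.domain), A ⟨x, hx⟩ = y → (x, y) ∈ A.graph :=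
    fun x y hx h => (LinearPMap.image_iff hx).mp h.symm
  have hQcl : ∀ w : H, (Q w, w - S w) ∈ closure G :=
    memcl (fun w => (Q w, w - S w)) (by fun_prop) (fun v => hgr _ _ (hQ v) (hAQ v))
  have hBcl : ∀ w : H, (ContinuousLinearMap.adjoint Q w, B w) ∈ closure G :=
    memcl (fun w => (ContinuousLinearMap.adjoint Q w, B w)) (by fun_prop)
      (fun v => hgr _ _ (hQstar v) (hB v))
  have hCcl : ∀ w : H, (ContinuousLinearMap.adjoint S w, C w) ∈ closure G :=
    memcl (fun w => (ContinuousLinearMap.adjoint S w, C w)) (by fun_prop)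
      (fun v => hgr _ _ (hSstar v) (hC v))
  have hadj := LinearPMap.adjoint_isFormalAdjoint hdense
  -- closure of the graph is contained in the adjoint graph
  have h1 : ∀ p ∈ closure G, p ∈ A.adjoint.graph := by
    intro p hp
    have hx : p.1 ∈ A.adjoint.domain :=
      A.mem_adjoint_domain_of_exists p.1 ⟨p.2, fun v => key p hp v⟩
    have heq : A.adjoint ⟨p.1, hx⟩ = p.2 :=
      LinearPMap.adjoint_apply_eq hdense _ (fun v => key p hp v)
    have hmem := (LinearPMap.image_iff hx).mp heq.symm
    simpa using hmem
  -- decomposition of adjoint-domain elements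
  have hdecomp : ∀ u : A.adjoint.domain,
      (u : H) = ContinuousLinearMap.adjoint S (u : H)
        + ContinuousLinearMap.adjoint Q (A.adjoint u) := by
    intro u
    refine hdense.eq_of_inner_left ℂ fun v' hv' => ?_
    obtain ⟨v, rfl⟩ : ∃ v : A.domain, (v : H) = v' := ⟨⟨v', hv'⟩, rfl⟩
    have ha := hadj u ⟨Q (v : H), hQ v⟩
    rw [hAQ v] at ha
    rw [inner_add_left, ContinuousLinearMap.adjoint_inner_left,
      ContinuousLinearMap.adjoint_inner_left, ha, inner_sub_right]
    ring
  -- adjoint graph is contained in the closure of the graph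
  have h2 : ∀ p ∈ A.adjoint.graph, p ∈ closure G := by
    intro p hp
    rcases A.adjoint.mem_graph_iff.mp hp with ⟨u, hu1, hu2⟩
    have hsum : ((u : H), C (u : H) + B (A.adjoint u)) ∈ closure G := by
      have hmem := A.graph.topologicalClosure.add_mem
        (show ((ContinuousLinearMap.adjoint S (u : H), C (u : H)) : H × H) ∈
            A.graph.topologicalClosure from hCcl (u : H))
        (show ((ContinuousLinearMap.adjoint Q (A.adjoint u), B (A.adjoint u)) : H × H) ∈
            A.graph.topologicalClosure from hBcl (A.adjoint u))
      have : ((ContinuousLinearMap.adjoint S (u : H)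
          + ContinuousLinearMap.adjoint Q (A.adjoint u),
          C (u : H) + B (A.adjoint u)) : H × H) ∈ closure G := hmem
      rwa [← hdecomp u] at this
    have heq : A.adjoint u = C (u : H) + B (A.adjoint u) := by
      refine hdense.eq_of_inner_left ℂ fun v' hv' => ?_
      obtain ⟨v, rfl⟩ : ∃ v : A.domain, (v : H) = v' := ⟨⟨v', hv'⟩, rfl⟩
      rw [hadj u v]
      exact (key _ hsum v).symm
    have hp' : p = ((u : H), A.adjoint u) := by rw [hu1, hu2]
    rw [hp', heq]
    exact hsum
  have hgraph_eq : A.graph.topologicalClosure = A.adjoint.graph := by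
    apply le_antisymm
    · intro p hp; exact h1 p hp
    · intro p hp; exact h2 p hp
  have hclosable : A.IsClosable := ⟨A.adjoint, hgraph_eq⟩
  have hadj_eq : A.adjoint = A.closure := by
    apply LinearPMap.eq_of_eq_graph
    rw [← hclosable.graph_closure_eq_closure_graph]
    exact hgraph_eq.symm
  have hTG : A.closure.graph = A.adjoint.graph := (congrArg LinearPMap.graph hadj_eq).symm
  have hTdense : Dense (A.closure.domain : Set H) :=
    hdense.mono (fun x hx => A.le_closure.1 hx)
  -- symmetry of the closure
  have key2 : ∀ p ∈ closure G, ∀ q ∈ closure G, ⟪p.2, q.1⟫_ℂ = ⟪p.1, q.2⟫_ℂ := by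
    intro p hp q hq
    have hsub : G ⊆ {r : H × H | ⟪r.2, q.1⟫_ℂ = ⟪r.1, q.2⟫_ℂ} := by
      intro r hr
      rcases A.mem_graph_iff.mp hr with ⟨v, h1', h2'⟩
      have hk := congrArg (starRingEnd ℂ) (key q hq v)
      simp only [inner_conj_symm] at hk
      simp only [Set.mem_setOf_eq, ← h1', ← h2']
      exact hk.symm
    exact closure_minimal hsub
      (isClosed_eq (continuous_snd.inner continuous_const)
        (continuous_fst.inner continuous_const)) hp
  -- self-adjointness of the closure
  have hself : A.closure.adjoint = A.closure := by
    apply LinearPMap.eq_of_eq_graph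
    apply le_antisymm
    · intro p hp
      rcases A.closure.adjoint.mem_graph_iff.mp hp with ⟨u, hu1, hu2⟩
      have hfa := LinearPMap.adjoint_isFormalAdjoint hTdense
      have hk : ∀ v : A.domain, ⟪p.2, (v : H)⟫_ℂ = ⟪p.1, A v⟫_ℂ := by
        intro v
        have hv : (v : H) ∈ A.closure.domain := A.le_closure.1 v.2
        have hAv : A.closure ⟨(v : H), hv⟩ = A v := (A.le_closure.2 rfl).symm
        have hfav := hfa u ⟨(v : H), hv⟩
        rw [hu2, hAv, hu1] at hfav
        exact hfav
      have hx : p.1 ∈ A.adjoint.domain :=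
        A.mem_adjoint_domain_of_exists p.1 ⟨p.2, hk⟩
      have heq : A.adjoint ⟨p.1, hx⟩ = p.2 :=
        LinearPMap.adjoint_apply_eq hdense _ hk
      have hmem := (LinearPMap.image_iff hx).mp heq.symm
      show p ∈ A.closure.graph
      rw [hTG]
      simpa using hmem
    · intro p hp
      have hpc : p ∈ closure G := h2 p (by rwa [← hTG])
      have hk : ∀ v : A.closure.domain, ⟪p.2, (v : H)⟫_ℂ = ⟪p.1, A.closure v⟫_ℂ := by
        intro v
        have hv : ((v : H), A.closure v) ∈ closure G := by
          have := A.closure.mem_graph v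
          rw [hTG] at this
          exact h2 _ this
        exact key2 p hpc _ hv
      have hx : p.1 ∈ A.closure.adjoint.domain :=
        A.closure.mem_adjoint_domain_of_exists p.1 ⟨p.2, hk⟩
      have heq : A.closure.adjoint ⟨p.1, hx⟩ = p.2 :=
        LinearPMap.adjoint_apply_eq hTdense _ hk
      have hmem := (LinearPMap.image_iff hx).mp heq.symm
      simpa using hmem
  exact ⟨hclosable, LinearPMap.isSelfAdjoint_def.mpr hself, hadj_eq⟩
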